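/- Suppose (V,𝓕) is an NWBTS(v;b) with b < binom(v,3), and suppose 𝓕′ is the union of q pairwise disjoint simple S_p(2,3,v)s on V. If 𝓕 and 𝓕′ share no block, then (V, 𝓕 ∪ 𝓕′) is an NWBTS(v;c) with c = b + pq·v(v−1)/6. -/

import Mathlib

namespace DataPlacement

open Finset

variable {α : Type*} [DecidableEq α]

/-- Number of blocks of the family `F` (with multiplicity) containing `T`. -/
def lamF (F : Multiset (Finset α)) (T : Finset α) : ℕ :=
  Multiset.card (F.filter fun B => T ⊆ B)

/-- Triple system with `b` blocks on a point set `X` of size `v`. -/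
def IsTSOn (X : Finset α) (v b : ℕ) (F : Multiset (Finset α)) : Prop :=
  X.card = v ∧ Multiset.card F = b ∧ ∀ B ∈ F, B.card = 3 ∧ B ⊆ X

/-- `(l, e)` is the pair associated with `(v, b)`:
`3b = l·v(v−1)/2 + e` with `−v/2 < e < v/2`. -/
def AssocPair (v b l : ℕ) (e : ℤ) : Prop :=
  6 * (b : ℤ) = (l : ℤ) * v * ((v : ℤ) - 1) + 2 * e ∧
    -(v : ℤ) < 2 * e ∧ 2 * e < (v : ℤ)

/-- Condition (C1). -/
def CondC1 (v b : ℕ) : Prop :=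
  v % 3 = 2 ∧ ∃ l : ℕ, 0 < l ∧
    ((v % 6 = 5 ∧ (l % 3 = 1 ∨ l % 3 = 2)) ∨
     (v % 6 = 2 ∧ (l % 6 = 2 ∨ l % 6 = 4))) ∧
    (b = l * v * (v - 1) / 6 ∨ b = (l * v * (v - 1) + 5) / 6)

/-- Condition (C2). -/
def CondC2 (v b : ℕ) : Prop :=
  v % 2 = 0 ∧ ∃ l : ℕ, 0 < l ∧ l % 2 = 1 ∧
    (l : ℤ) * v * ((v : ℤ) - 1) - v < 6 * (b : ℤ) ∧
    6 * (b : ℤ) < (l : ℤ) * v * ((v : ℤ) - 1) + v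

/-- Pairs of points of `X` whose block count equals `l + i`. -/
def Dlev (X : Finset α) (F : Multiset (Finset α)) (l : ℕ) (i : ℤ) :
    Finset (Finset α) :=
  (X.powersetCard 2).filter fun p => (lamF F p : ℤ) = (l : ℤ) + i

/-- Every pair of points of `X` lies in `l−1`, `l`, or `l+1` blocks. -/
def PairRangeOn (X : Finset α) (F : Multiset (Finset α)) (l : ℕ) : Prop :=
  ∀ p ∈ X.powersetCard 2,
    (l : ℤ) - 1 ≤ (lamF F p : ℤ) ∧ (lamF F p : ℤ) ≤ (l : ℤ) + 1

def IsTriangle (D : Finset (Finset α)) : Prop :=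
  ∃ x y z : α, x ≠ y ∧ x ≠ z ∧ y ≠ z ∧
    D = {({x, y} : Finset α), {y, z}, {x, z}}

def IsFourCycle (D : Finset (Finset α)) : Prop :=
  ∃ x y z w : α, x ≠ y ∧ x ≠ z ∧ x ≠ w ∧ y ≠ z ∧ y ≠ w ∧ z ≠ w ∧
    D = {({x, y} : Finset α), {y, z}, {z, w}, {x, w}}

/-- `D` is a perfect matching on the point set `X`. -/
def IsPerfectMatchingOn (X : Finset α) (D : Finset (Finset α)) : Prop :=
  (∀ p ∈ D, p.card = 2 ∧ p ⊆ X) ∧ ∀ x ∈ X, ∃! p, p ∈ D ∧ x ∈ p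

/-- Defect-graph shape required for nearly 2-balance under (C1). -/
def C1ShapeOn (X : Finset α) (F : Multiset (Finset α)) (l : ℕ) (e : ℤ) : Prop :=
  (e = 1 ∧ IsTriangle (Dlev X F l 1 ∪ Dlev X F l (-1)) ∧
     (Dlev X F l 1).card = 2 ∧ (Dlev X F l (-1)).card = 1) ∨
  (e = -1 ∧ IsTriangle (Dlev X F l 1 ∪ Dlev X F l (-1)) ∧
     (Dlev X F l 1).card = 1 ∧ (Dlev X F l (-1)).card = 2) ∨
  (e = 2 ∧ IsFourCycle (Dlev X F l 1 ∪ Dlev X F l (-1)) ∧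
     (Dlev X F l 1).card = 3 ∧ (Dlev X F l (-1)).card = 1) ∨
  (e = -2 ∧ IsFourCycle (Dlev X F l 1 ∪ Dlev X F l (-1)) ∧
     (Dlev X F l 1).card = 1 ∧ (Dlev X F l (-1)).card = 3)

/-- Defect-graph shape required for nearly 2-balance under (C2)
(here `v = X.card`). -/
def C2ShapeOn (X : Finset α) (v : ℕ) (F : Multiset (Finset α)) (l : ℕ) (e : ℤ) : Prop :=
  (((v : ℤ) - 2 * e) % 4 = 0 ∧
    IsPerfectMatchingOn X (Dlev X F l 1 ∪ Dlev X F l (-1)) ∧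
    4 * ((Dlev X F l 1).card : ℤ) = (v : ℤ) + 2 * e ∧
    4 * ((Dlev X F l (-1)).card : ℤ) = (v : ℤ) - 2 * e) ∨
  (((v : ℤ) - 2 * e) % 4 ≠ 0 ∧
    ∃ (c a₂ a₃ a₄ : α) (star : Finset (Finset α)),
      c ∈ X ∧ a₂ ∈ X ∧ a₃ ∈ X ∧ a₄ ∈ X ∧
      c ≠ a₂ ∧ c ≠ a₃ ∧ c ≠ a₄ ∧ a₂ ≠ a₃ ∧ a₂ ≠ a₄ ∧ a₃ ≠ a₄ ∧
      star = {({c, a₂} : Finset α), {c, a₃}, {c, a₄}} ∧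
      star ⊆ Dlev X F l 1 ∪ Dlev X F l (-1) ∧
      IsPerfectMatchingOn (X \ {c, a₂, a₃, a₄})
        ((Dlev X F l 1 ∪ Dlev X F l (-1)) \ star) ∧
      (((star ∩ Dlev X F l 1).card = 2 ∧ (star ∩ Dlev X F l (-1)).card = 1 ∧
          4 * (((Dlev X F l 1) \ star).card : ℤ) = (v : ℤ) - 6 + 2 * e ∧
          4 * (((Dlev X F l (-1)) \ star).card : ℤ) = (v : ℤ) - 2 - 2 * e) ∨
        ((star ∩ Dlev X F l 1).card = 1 ∧ (star ∩ Dlev X F l (-1)).card = 2 ∧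
          4 * (((Dlev X F l 1) \ star).card : ℤ) = (v : ℤ) - 2 + 2 * e ∧
          4 * (((Dlev X F l (-1)) \ star).card : ℤ) = (v : ℤ) - 6 - 2 * e)))

/-- `F` is 3-balanced on `X`: the multiplicities of any two triples of `X`
differ by at most one. -/
def ThreeBalancedOn (X : Finset α) (F : Multiset (Finset α)) : Prop :=
  ∀ T₁ ∈ X.powersetCard 3, ∀ T₂ ∈ X.powersetCard 3, F.count T₁ ≤ F.count T₂ + 1

/-- Nearly well-balanced triple system NWBTS(v;b) on the point set `X`. -/
def IsNWBTSOn (X : Finset α) (v b : ℕ) (F : Multiset (Finset α)) : Prop :=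
  IsTSOn X v b F ∧ ThreeBalancedOn X F ∧
  ∃ (l : ℕ) (e : ℤ), 0 < l ∧ AssocPair v b l e ∧ PairRangeOn X F l ∧
    ((CondC1 v b ∧ C1ShapeOn X F l e) ∨ (CondC2 v b ∧ C2ShapeOn X v F l e))

/-- `B` is an S_mu(2,3,·) design on the point set `X`. -/
def IsSDesignOn (X : Finset α) (mu : ℕ) (B : Multiset (Finset α)) : Prop :=
  (∀ A ∈ B, A.card = 3 ∧ A ⊆ X) ∧ ∀ p ∈ X.powersetCard 2, lamF B p = mu

/-- `B` is a GDD_mu(2,3,·) of type `1^{·}u^1` on `X` with long group `U`. -/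
def IsGDD1u (X : Finset α) (mu u : ℕ) (U : Finset α) (B : Multiset (Finset α)) : Prop :=
  U ⊆ X ∧ U.card = u ∧
  (∀ A ∈ B, A.card = 3 ∧ A ⊆ X ∧ (A ∩ U).card ≤ 1) ∧
  ∀ p ∈ X.powersetCard 2, ¬ p ⊆ U → lamF B p = mu

/-- `B` is a GDD_mu(2,3,·) with group family `G`. -/
def IsGDDgroups (mu : ℕ) {n : ℕ} (G : Fin n → Finset α) (B : Multiset (Finset α)) : Prop :=
  (∀ A ∈ B, A.card = 3 ∧ A ⊆ Finset.univ.biUnion G ∧ ∀ i, (A ∩ G i).card ≤ 1) ∧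
  ∀ x y : α, x ≠ y → (∃ i j, i ≠ j ∧ x ∈ G i ∧ y ∈ G j) → lamF B {x, y} = mu

/-- Nearly group divisible design NGDD(2,3,·) of type `2^{(m,n)}u^1` on `X`. -/
def IsNGDD (X : Finset α) (m n u : ℕ) (G : Fin (m + n) → Finset α) (U : Finset α)
    (B : Multiset (Finset α)) : Prop :=
  (∀ i, (G i).card = 2 ∧ G i ⊆ X) ∧ U.card = u ∧ U ⊆ X ∧
  (∀ i j, i ≠ j → Disjoint (G i) (G j)) ∧ (∀ i, Disjoint (G i) U) ∧
  U ∪ Finset.univ.biUnion G = X ∧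
  (∀ A ∈ B, A.card = 3 ∧ A ⊆ X) ∧
  (∀ i : Fin (m + n), (i : ℕ) < m → lamF B (G i) = 2) ∧
  (∀ i : Fin (m + n), m ≤ (i : ℕ) → lamF B (G i) = 0) ∧
  (∀ p ∈ U.powersetCard 2, lamF B p = 0) ∧
  (∀ p ∈ X.powersetCard 2, (∀ i, ¬ p ⊆ G i) → ¬ p ⊆ U → lamF B p = 1)

/-- Candelabra system CS(g^n : s) on `X` with stem `S` and groups `G`. -/
def IsCS (X : Finset α) (g n s : ℕ) (S : Finset α) (G : Fin n → Finset α)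
    (A : Multiset (Finset α)) : Prop :=
  S.card = s ∧ S ⊆ X ∧ (∀ i, (G i).card = g ∧ G i ⊆ X) ∧
  (∀ i j, i ≠ j → Disjoint (G i) (G j)) ∧ (∀ i, Disjoint (G i) S) ∧
  S ∪ Finset.univ.biUnion G = X ∧
  (∀ B ∈ A, B.card = 3 ∧ B ⊆ X) ∧
  (∀ T ∈ X.powersetCard 3, (∀ i, ¬ T ⊆ S ∪ G i) → lamF A T = 1) ∧
  (∀ T ∈ X.powersetCard 3, (∃ i, T ⊆ S ∪ G i) → lamF A T = 0)

/-- Partitionable candelabra system PCS(g^n : s). -/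
def IsPCS (X : Finset α) (g n s : ℕ) (S : Finset α) (G : Fin n → Finset α)
    (A : Multiset (Finset α)) : Prop :=
  IsCS X g n s S G A ∧
  ∃ (Ax : α → Multiset (Finset α)) (Ai : Fin (s - 2) → Multiset (Finset α)),
    A = (∑ p ∈ X \ S, Ax p) + ∑ i, Ai i ∧
    (∀ i : Fin n, ∀ p ∈ G i, IsGDD1u X 1 (g + s) (G i ∪ S) (Ax p)) ∧
    (∀ j, IsGDDgroups 1 G (Ai j))

/-- g-PCS_2((2ag)^n : s). -/
def IsGPCS2 (X : Finset α) (a g n s : ℕ) (S : Finset α) (G : Fin n → Finset α)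
    (A : Multiset (Finset α)) : Prop :=
  IsCS X (2 * a * g) n s S G A ∧
  ∃ (P : Fin (g * n) → Multiset (Finset α)) (grp : Fin (g * n) → Fin n),
    (∑ i, P i) ≤ A ∧
    (∀ j : Fin n, (Finset.univ.filter fun i => grp i = j).card = g) ∧
    (∀ i, IsGDD1u X 2 (2 * a * g + s) (G (grp i) ∪ S) (P i))

/-- g-PCS_2^r((2ag)^n : s). -/
def IsGPCS2r (X : Finset α) (a g n s r : ℕ) (S : Finset α) (G : Fin n → Finset α)
    (A : Multiset (Finset α)) : Prop :=
  IsCS X (2 * a * g) n s S G A ∧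
  ∃ (P : Fin (g * n) → Multiset (Finset α)) (grp : Fin (g * n) → Fin n),
    (∑ i, P i) ≤ A ∧
    (∀ j : Fin n, (Finset.univ.filter fun i => grp i = j).card = g) ∧
    (∀ i, IsGDD1u X 2 (2 * a * g + s) (G (grp i) ∪ S) (P i)) ∧
    ∃ (i : Fin (g * n)) (N : Multiset (Finset α))
      (Gs : Fin (r + (a * g * (n - 1) - r)) → Finset α),
      N ≤ P i ∧ IsNGDD X r (a * g * (n - 1) - r) (2 * a * g + s) Gs (G (grp i) ∪ S) N

/-- GDD(3,3,·) of type `g^k` on `X` with groups `H`. -/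
def IsGDD3On (X : Finset α) (g : ℕ) {k : ℕ} (H : Fin k → Finset α)
    (A : Multiset (Finset α)) : Prop :=
  (∀ i, (H i).card = g ∧ H i ⊆ X) ∧ (∀ i j, i ≠ j → Disjoint (H i) (H j)) ∧
  Finset.univ.biUnion H = X ∧
  (∀ B ∈ A, B.card = 3 ∧ B ⊆ X ∧ ∀ i, (B ∩ H i).card ≤ 1) ∧
  (∀ T ∈ X.powersetCard 3, (∀ i, (T ∩ H i).card ≤ 1) → lamF A T = 1)

/-- `B` is a GDD_mu(2,3,·) on the points not in the omitted group `H o`,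
with group set `{H i : i ≠ o}`. -/
def IsGDDOmit (mu : ℕ) {k : ℕ} (H : Fin k → Finset α) (o : Fin k)
    (B : Multiset (Finset α)) : Prop :=
  (∀ A ∈ B, A.card = 3 ∧ Disjoint A (H o) ∧ ∀ i, (A ∩ H i).card ≤ 1) ∧
  ∀ x y : α, x ≠ y →
    (∃ i j, i ≠ j ∧ i ≠ o ∧ j ≠ o ∧ x ∈ H i ∧ y ∈ H j) → lamF B {x, y} = mu

/-- PGDD_2((2g)^{n+1}). -/
def IsPGDD2 (g n : ℕ) (H : Fin (n + 1) → Finset (Fin (2 * g * (n + 1))))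
    (A : Multiset (Finset (Fin (2 * g * (n + 1))))) : Prop :=
  IsGDD3On Finset.univ (2 * g) H A ∧
  ∃ (i0 : Fin (n + 1))
    (P : Fin (g * n + 2 * g) → Multiset (Finset (Fin (2 * g * (n + 1)))))
    (f : Fin (g * n + 2 * g) → Fin (n + 1)),
    A = ∑ i, P i ∧
    (∀ j, j ≠ i0 → (Finset.univ.filter fun i => f i = j).card = g) ∧
    (∀ i, f i ≠ i0 → IsGDDOmit 2 H (f i) (P i)) ∧
    (∀ i, f i = i0 → IsGDDOmit 1 H i0 (P i))

/-- 1-FG(3,(K1,KT),n) of type 1^n. -/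
def Is1FG (n : ℕ) (K1 KT : Set ℕ) (A1 AT : Multiset (Finset (Fin n))) : Prop :=
  (∀ B ∈ A1, B.card ∈ K1) ∧ (∀ B ∈ AT, B.card ∈ KT) ∧
  (∀ p ∈ (Finset.univ : Finset (Fin n)).powersetCard 2, lamF A1 p = 1) ∧
  (∀ T ∈ (Finset.univ : Finset (Fin n)).powersetCard 3, lamF (A1 + AT) T = 1)

/-- PICS_2^r((2g)^3 : 0). -/
def IsPICS2 (g r : ℕ) (G : Fin 3 → Finset (Fin (6 * g)))
    (A : Multiset (Finset (Fin (6 * g)))) : Prop :=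
  IsCS Finset.univ (2 * g) 3 0 (∅ : Finset (Fin (6 * g))) G A ∧
  ∃ P : Fin (4 * g - 2) → Multiset (Finset (Fin (6 * g))),
    A = ∑ i, P i ∧
    (∀ i : Fin (4 * g - 2), (i : ℕ) < 2 * g → IsSDesignOn Finset.univ 2 (P i)) ∧
    (∃ i : Fin (4 * g - 2), (i : ℕ) < 2 * g ∧
      ∃ (N : Multiset (Finset (Fin (6 * g))))
        (Gs : Fin (r + (3 * g - r)) → Finset (Fin (6 * g))),
        N ≤ P i ∧ IsNGDD Finset.univ r (3 * g - r) 0 Gs ∅ N) ∧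
    (∀ i : Fin (4 * g - 2), 2 * g ≤ (i : ℕ) → IsGDDgroups 1 G (P i))

/-- Number of ordered pairs of blocks of `F` whose intersection has exactly
`j` points. -/
def interCount (F : Multiset (Finset α)) (j : ℕ) : ℕ :=
  Multiset.card
    ((F.bind fun A => F.map fun B => (A, B)).filter fun p => (p.1 ∩ p.2).card = j)

/-- The polynomial `P(F, x) = Σ_{j=0}^{3} v_j x^j`. -/
noncomputable def Pval (F : Multiset (Finset α)) (x : ℝ) : ℝ :=
  ∑ j ∈ Finset.range 4, (interCount F j : ℝ) * x ^ j

/-- Optimal data placement for triple replication. -/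
def IsOptimalDP (v b : ℕ) (F : Multiset (Finset (Fin v))) : Prop :=
  IsTSOn Finset.univ v b F ∧
  ∀ F' : Multiset (Finset (Fin v)), IsTSOn Finset.univ v b F' →
    ∀ x : ℝ, 1 ≤ x → Pval F x ≤ Pval F' x


section Aux

lemma lamF_add (F G : Multiset (Finset α)) (T : Finset α) :
    lamF (F + G) T = lamF F T + lamF G T := by
  simp [lamF, Multiset.filter_add]

lemma lamF_cons (B : Finset α) (M : Multiset (Finset α)) (P : Finset α) :
    lamF (B ::ₘ M) P = (if P ⊆ B then 1 else 0) + lamF M P := by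
  by_cases h : P ⊆ B <;> simp [lamF, Multiset.filter_cons, h] <;> omega

lemma lamF_sum {ι : Type*} (s : Finset ι) (D : ι → Multiset (Finset α)) (T : Finset α) :
    lamF (∑ i ∈ s, D i) T = ∑ i ∈ s, lamF (D i) T := by
  classical
  induction s using Finset.induction_on with
  | empty => simp [lamF]
  | @insert a s ha ih => rw [Finset.sum_insert ha, Finset.sum_insert ha, lamF_add, ih]

lemma multiset_card_sum {ι β : Type*} (s : Finset ι) (f : ι → Multiset β) :
    Multiset.card (∑ i ∈ s, f i) = ∑ i ∈ s, Multiset.card (f i) := by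
  classical
  induction s using Finset.induction_on with
  | empty => simp
  | @insert a s ha ih => rw [Finset.sum_insert ha, Finset.sum_insert ha, Multiset.card_add, ih]

lemma two_mul_choose_two (n : ℕ) : 2 * n.choose 2 = n * (n - 1) := by
  induction n with
  | zero => rfl
  | succ m ih =>
      rw [Nat.choose_succ_succ, Nat.mul_add, ih, Nat.choose_one_right, Nat.add_sub_cancel]
      cases m with
      | zero => rfl
      | succ j =>
          rw [Nat.add_sub_cancel]
          ring

lemma pairs_in_triple {B X : Finset α} (h3 : B.card = 3) (hBX : B ⊆ X) :
    ((X.powersetCard 2).filter fun P => P ⊆ B).card = 3 := by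
  have hset : (X.powersetCard 2).filter (fun P => P ⊆ B) = B.powersetCard 2 := by
    ext P
    simp only [Finset.mem_filter, Finset.mem_powersetCard]
    exact ⟨fun ⟨⟨_, h2⟩, hPB⟩ => ⟨hPB, h2⟩, fun ⟨hPB, h2⟩ => ⟨⟨hPB.trans hBX, h2⟩, hPB⟩⟩
  rw [hset, Finset.card_powersetCard, h3]
  decide

lemma card_filter_mem_pc2 (X : Finset α) (x : α) (hx : x ∈ X) :
    ((X.powersetCard 2).filter fun P => x ∈ P).card = X.card - 1 := by
  have hset : (X.powersetCard 2).filter (fun P => x ∈ P)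
      = X.powersetCard 2 \ (X.erase x).powersetCard 2 := by
    ext P
    simp only [Finset.mem_filter, Finset.mem_sdiff, Finset.mem_powersetCard]
    constructor
    · rintro ⟨⟨hPX, h2⟩, hxP⟩
      refine ⟨⟨hPX, h2⟩, fun h => ?_⟩
      exact (Finset.mem_erase.1 (h.1 hxP)).1 rfl
    · rintro ⟨⟨hPX, h2⟩, hne⟩
      refine ⟨⟨hPX, h2⟩, ?_⟩
      by_contra hxP
      exact hne ⟨fun y hy => Finset.mem_erase.2 ⟨fun hyx => hxP (hyx ▸ hy), hPX hy⟩, h2⟩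
  rw [hset, Finset.card_sdiff_of_subset (Finset.powersetCard_mono (Finset.erase_subset x X)),
    Finset.card_powersetCard, Finset.card_powersetCard, Finset.card_erase_of_mem hx]
  obtain ⟨m, hm⟩ : ∃ m, X.card = m + 1 :=
    ⟨X.card - 1, by have : 0 < X.card := Finset.card_pos.2 ⟨x, hx⟩; omega⟩
  rw [hm, Nat.add_sub_cancel]
  have ha := two_mul_choose_two (m+1)
  rw [Nat.add_sub_cancel] at ha
  have hb2 := two_mul_choose_two m
  have hxy : (m+1) * m = m * (m-1) + 2 * m := by
    cases m with
    | zero => rfl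
    | succ j => rw [Nat.add_sub_cancel]; ring
  omega

lemma sum_lamF_pairs (X : Finset α) (M : Multiset (Finset α)) :
    (∀ B ∈ M, B.card = 3 ∧ B ⊆ X) →
    ∑ P ∈ X.powersetCard 2, lamF M P = 3 * Multiset.card M := by
  induction M using Multiset.induction_on with
  | empty => intro _; simp [lamF]
  | cons B M ih =>
      intro h
      have hB := h B (Multiset.mem_cons_self _ _)
      simp only [lamF_cons, Finset.sum_add_distrib]
      rw [ih fun A hA => h A (Multiset.mem_cons_of_mem hA), ← Finset.card_filter,
        pairs_in_triple hB.1 hB.2, Multiset.card_cons]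
      ring

lemma even_sum_lamF_mem (X : Finset α) (x : α) (M : Multiset (Finset α)) :
    (∀ B ∈ M, B.card = 3 ∧ B ⊆ X) →
    Even (∑ P ∈ (X.powersetCard 2).filter (fun P => x ∈ P), lamF M P) := by
  induction M using Multiset.induction_on with
  | empty => intro _; simp [lamF]
  | cons B M ih =>
      intro h
      have hB := h B (Multiset.mem_cons_self _ _)
      simp only [lamF_cons, Finset.sum_add_distrib]
      refine Even.add ?_ (ih fun A hA => h A (Multiset.mem_cons_of_mem hA))
      rw [← Finset.card_filter, Finset.filter_filter]
      by_cases hxB : x ∈ B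
      · have hset : (X.powersetCard 2).filter (fun P => x ∈ P ∧ P ⊆ B)
            = (B.powersetCard 2).filter (fun P => x ∈ P) := by
          ext P
          simp only [Finset.mem_filter, Finset.mem_powersetCard]
          constructor
          · rintro ⟨⟨_, h2⟩, hxP, hPB⟩; exact ⟨⟨hPB, h2⟩, hxP⟩
          · rintro ⟨⟨hPB, h2⟩, hxP⟩; exact ⟨⟨hPB.trans hB.2, h2⟩, hxP, hPB⟩
        rw [hset, card_filter_mem_pc2 B x hxB, hB.1]
        exact ⟨1, rfl⟩
      · have hset : (X.powersetCard 2).filter (fun P => x ∈ P ∧ P ⊆ B) = ∅ :=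
          Finset.filter_eq_empty_iff.2 fun P _ hP => hxB (hP.2 hP.1)
        rw [hset]
        simp

end Aux

/-- adding disjoint simple S_p(2,3,v)s to an NWBTS. -/
theorem stmt_4 (v b p q : ℕ)
    (F F' : Multiset (Finset (Fin v)))
    (hF : IsNWBTSOn Finset.univ v b F) (hb : b < v.choose 3)
    (D : Fin q → Multiset (Finset (Fin v)))
    (hD : ∀ i, (D i).Nodup ∧ IsSDesignOn Finset.univ p (D i))
    (hDdisj : ∀ i j, i ≠ j → Disjoint (D i) (D j))
    (hF' : F' = ∑ i, D i)
    (hdisj : Disjoint F F') :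
    IsNWBTSOn Finset.univ v (b + p * q * v * (v - 1) / 6) (F + F') := by
  classical
  rcases Nat.eq_zero_or_pos q with hq | hq
  · subst hq
    simp only [Finset.univ_eq_empty, Finset.sum_empty] at hF'
    subst hF'
    simpa using hF
  · obtain ⟨⟨hXcard, hFcard, hFblocks⟩, hF3, l, e, hl, hassoc, hrange, hshape⟩ := hF
    have hv1 : 1 ≤ v := by
      have h1 := hassoc.2.1; have h2 := hassoc.2.2; omega
    obtain ⟨w, rfl⟩ : ∃ w, v = w + 1 := ⟨v - 1, by omega⟩
    simp only [Nat.add_sub_cancel] at *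
    set i0 : Fin q := ⟨0, hq⟩ with hi0
    have hDblocks : ∀ i, ∀ B ∈ D i, B.card = 3 ∧ B ⊆ (Finset.univ : Finset (Fin (w+1))) :=
      fun i => ((hD i).2).1
    have hpair : ∀ i, ∀ P ∈ (Finset.univ : Finset (Fin (w+1))).powersetCard 2,
        lamF (D i) P = p := fun i => ((hD i).2).2
    have hcardD : ∀ i, 6 * Multiset.card (D i) = p * ((w+1) * w) := by
      intro i
      have h1 := sum_lamF_pairs Finset.univ (D i) (hDblocks i)
      have h2 : ∑ P ∈ (Finset.univ : Finset (Fin (w+1))).powersetCard 2, lamF (D i) P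
          = (w+1).choose 2 * p := by
        rw [Finset.sum_congr rfl fun P hP => hpair i P hP, Finset.sum_const,
          Finset.card_powersetCard, Finset.card_univ, Fintype.card_fin, smul_eq_mul]
      have h3 : 2 * (w+1).choose 2 = (w+1) * w := by
        have h := two_mul_choose_two (w+1)
        simpa using h
      calc 6 * Multiset.card (D i) = 2 * (3 * Multiset.card (D i)) := by ring
        _ = 2 * ((w+1).choose 2 * p) := by rw [← h1, h2]
        _ = (2 * (w+1).choose 2) * p := by ring
        _ = p * ((w+1) * w) := by rw [h3]; ring
    have hEp : Even (w * p) := by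
      have h1 := even_sum_lamF_mem Finset.univ (0 : Fin (w+1)) (D i0) (hDblocks i0)
      have h2 : ∑ P ∈ ((Finset.univ : Finset (Fin (w+1))).powersetCard 2).filter
            (fun P => (0 : Fin (w+1)) ∈ P), lamF (D i0) P = w * p := by
        rw [Finset.sum_congr rfl fun P hP => hpair i0 P (Finset.mem_of_mem_filter P hP),
          Finset.sum_const, card_filter_mem_pc2 _ _ (Finset.mem_univ _), Finset.card_univ,
          Fintype.card_fin, Nat.add_sub_cancel, smul_eq_mul]
      rw [h2] at h1
      exact h1
    have hpv : (w+1) % 2 = 0 → p % 2 = 0 := by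
      intro hvEven
      rcases Nat.even_mul.1 hEp with h | h
      · exact absurd (Nat.even_iff.1 h) (by omega)
      · exact Nat.even_iff.1 h
    have hp3 : (w+1) % 3 = 2 → p % 3 = 0 := by
      intro hv3
      have h6 : (6:ℕ) ∣ p * ((w+1) * w) := ⟨Multiset.card (D i0), (hcardD i0).symm⟩
      have h3 : (3:ℕ) ∣ p * ((w+1) * w) := dvd_trans (by norm_num) h6
      have hmod : ((w+1) * w) % 3 = 2 := by
        obtain ⟨c, hc⟩ : ∃ c, w = 3 * c + 1 := ⟨w / 3, by omega⟩
        subst hc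
        have he : (3*c+1+1) * (3*c+1) = 3 * (3*c*c + 3*c) + 2 := by ring
        rw [he]
        omega
      have hnd : ¬ (3:ℕ) ∣ ((w+1) * w) := by
        rintro ⟨c, hc⟩
        omega
      have hcop : Nat.Coprime 3 ((w+1) * w) :=
        (Nat.Prime.coprime_iff_not_dvd Nat.prime_three).2 hnd
      obtain ⟨c, hc⟩ := hcop.dvd_of_dvd_mul_right h3
      omega
    have hK : ∀ P ∈ (Finset.univ : Finset (Fin (w+1))).powersetCard 2,
        lamF F' P = p * q := by
      intro P hP
      rw [hF', lamF_sum, Finset.sum_congr rfl fun i _ => hpair i P hP, Finset.sum_const,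
        Finset.card_univ, Fintype.card_fin, smul_eq_mul, mul_comm]
    have hcF' : 6 * Multiset.card F' = p * q * ((w+1) * w) := by
      rw [hF', multiset_card_sum, Finset.mul_sum,
        Finset.sum_congr rfl fun i _ => hcardD i, Finset.sum_const,
        Finset.card_univ, Fintype.card_fin, smul_eq_mul]
      ring
    obtain ⟨k, hk⟩ : ∃ k, p * q * (w+1) * w = 6 * k :=
      ⟨Multiset.card F', by rw [mul_assoc, ← hcF']⟩
    have hcF'k : Multiset.card F' = k := by
      have h2 : p * q * ((w+1) * w) = 6 * k := by rw [← mul_assoc]; exact hk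
      omega
    have hgoal_b : b + p * q * (w + 1) * w / 6 = b + k := by omega
    rw [hgoal_b]
    have hDl : ∀ i : ℤ, Dlev (Finset.univ : Finset (Fin (w+1))) (F + F') (l + p * q) i
        = Dlev Finset.univ F l i := by
      intro i
      ext P
      simp only [Dlev, Finset.mem_filter]
      constructor
      · rintro ⟨h1, h2⟩
        refine ⟨h1, ?_⟩
        rw [lamF_add, hK P h1] at h2
        omega
      · rintro ⟨h1, h2⟩
        refine ⟨h1, ?_⟩
        rw [lamF_add, hK P h1]
        omega
    refine ⟨⟨by simp, ?_, ?_⟩, ?_, l + p * q, e, by omega, ?_, ?_, ?_⟩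
    · rw [Multiset.card_add, hFcard, hcF'k]
    · intro B hB
      rcases Multiset.mem_add.1 hB with h | h
      · exact hFblocks B h
      · rw [hF'] at h
        obtain ⟨i, _, hi⟩ := Multiset.mem_sum.1 h
        exact hDblocks i B hi
    · -- ThreeBalancedOn
      have hcntF' : ∀ T, F'.count T ≤ 1 := by
        intro T
        rw [hF', Multiset.count_sum']
        by_cases hT : ∃ i, T ∈ D i
        · obtain ⟨i1, hi1⟩ := hT
          rw [Finset.sum_eq_single i1
            (fun j _ hj => Multiset.count_eq_zero.2 fun hTj => Multiset.disjoint_left.1 (hDdisj j i1 hj) hTj hi1)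
            (fun h => absurd (Finset.mem_univ i1) h)]
          exact Multiset.nodup_iff_count_le_one.1 (hD i1).1 T
        · push_neg at hT
          rw [Finset.sum_eq_zero fun i _ => Multiset.count_eq_zero.2 (hT i)]
          omega
      have hT0 : ∃ T0 ∈ (Finset.univ : Finset (Fin (w+1))).powersetCard 3,
          F.count T0 = 0 := by
        by_contra hcon
        push_neg at hcon
        have hsub : F.toFinset ⊆ (Finset.univ : Finset (Fin (w+1))).powersetCard 3 := by
          intro B hB
          exact Finset.mem_powersetCard.2
            ⟨(hFblocks B (Multiset.mem_toFinset.1 hB)).2,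
             (hFblocks B (Multiset.mem_toFinset.1 hB)).1⟩
        have h1 : ∑ T ∈ (Finset.univ : Finset (Fin (w+1))).powersetCard 3, F.count T = b := by
          rw [← hFcard, ← Multiset.toFinset_sum_count_eq F]
          exact (Finset.sum_subset hsub fun T _ hT =>
            Multiset.count_eq_zero.2 fun hTF => hT (Multiset.mem_toFinset.2 hTF)).symm
        have h2 : ((Finset.univ : Finset (Fin (w+1))).powersetCard 3).card
            ≤ ∑ T ∈ (Finset.univ : Finset (Fin (w+1))).powersetCard 3, F.count T := by
          rw [Finset.card_eq_sum_ones]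
          exact Finset.sum_le_sum fun T hT => Nat.one_le_iff_ne_zero.2 (hcon T hT)
        have h3 : ((Finset.univ : Finset (Fin (w+1))).powersetCard 3).card
            = (w+1).choose 3 := by
          simp [Finset.card_powersetCard]
        omega
      obtain ⟨T0, hT0mem, hT0z⟩ := hT0
      have hcntF : ∀ T ∈ (Finset.univ : Finset (Fin (w+1))).powersetCard 3,
          F.count T ≤ 1 := by
        intro T hT
        have := hF3 T hT T0 hT0mem
        omega
      intro T1 h1 T2 h2
      have hle1 : (F + F').count T1 ≤ 1 := by
        rw [Multiset.count_add]
        by_cases hTF : T1 ∈ F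
        · have hz : F'.count T1 = 0 := Multiset.count_eq_zero.2 fun hTF' => Multiset.disjoint_left.1 hdisj hTF hTF'
          have := hcntF T1 h1
          omega
        · have hz : F.count T1 = 0 := Multiset.count_eq_zero.2 hTF
          have := hcntF' T1
          omega
      omega
    · -- AssocPair
      refine ⟨?_, hassoc.2.1, hassoc.2.2⟩
      have hkZ : (6:ℤ) * k = (p:ℤ) * q * ((w:ℤ)+1) * w := by exact_mod_cast hk.symm
      have h1 := hassoc.1
      push_cast at h1 ⊢
      linear_combination h1 + hkZ
    · -- PairRangeOn
      intro P hP
      rw [lamF_add, hK P hP]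
      have h := hrange P hP
      omega
    · rcases hshape with ⟨hc1, hs1⟩ | ⟨hc2, hs2⟩
      · refine Or.inl ⟨?_, ?_⟩
        · obtain ⟨hv3, lc, hlc, hcong, hbo⟩ := hc1
          refine ⟨hv3, lc + p * q, by omega, ?_, ?_⟩
          · rcases hcong with ⟨hv5, h13⟩ | ⟨hv2, h24⟩
            · left
              refine ⟨hv5, ?_⟩
              have h3 := hp3 (by omega)
              have hpq : (p * q) % 3 = 0 := by
                obtain ⟨c, hc⟩ : ∃ c, p = 3 * c := ⟨p / 3, by omega⟩
                rw [hc, mul_assoc]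
                exact Nat.mul_mod_right 3 (c * q)
              omega
            · right
              refine ⟨hv2, ?_⟩
              have h3 := hp3 (by omega)
              have h2 := hpv (by omega)
              have hpq : (p * q) % 6 = 0 := by
                obtain ⟨c, hc⟩ : ∃ c, p = 6 * c := ⟨p / 6, by omega⟩
                rw [hc, mul_assoc]
                exact Nat.mul_mod_right 6 (c * q)
              omega
          · have hdistrib : (lc + p * q) * (w+1) * w
                = lc * (w+1) * w + p * q * (w+1) * w := by
              rw [Nat.add_mul, Nat.add_mul]
            simp only [Nat.add_sub_cancel]
            rcases hbo with hb1 | hb1 <;> simp only [Nat.add_sub_cancel] at hb1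
            · left
              rw [hdistrib, hk]
              omega
            · right
              rw [hdistrib, hk]
              omega
        · simp only [C1ShapeOn] at hs1 ⊢
          simp only [hDl]
          exact hs1
      · refine Or.inr ⟨?_, ?_⟩
        · obtain ⟨hv2, lc, hlc, hlodd, hr1, hr2⟩ := hc2
          have hp2 : p % 2 = 0 := hpv hv2
          have hpq : (p * q) % 2 = 0 := by
            obtain ⟨c, hc⟩ : ∃ c, p = 2 * c := ⟨p / 2, by omega⟩
            rw [hc, mul_assoc]
            exact Nat.mul_mod_right 2 (c * q)
          have hkZ : (6:ℤ) * k = (p:ℤ) * q * ((w:ℤ)+1) * w := by exact_mod_cast hk.symm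
          have hexp : ((lc:ℤ) + (p:ℤ) * q) * ((w:ℤ)+1) * (((w:ℤ)+1) - 1)
              = (lc:ℤ) * ((w:ℤ)+1) * (((w:ℤ)+1)-1) + (p:ℤ)*q*((w:ℤ)+1)*w := by ring
          refine ⟨hv2, lc + p * q, by omega, by omega, ?_, ?_⟩
          · push_cast at hr1 ⊢
            linarith [hexp, hkZ, hr1]
          · push_cast at hr2 ⊢
            linarith [hexp, hkZ, hr2]
        · simp only [C2ShapeOn] at hs2 ⊢
          simp only [hDl]
          exact hs2

end DataPlacement
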